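/- Theorem (stabilization via Riccati feedback): If P is positive semidefinite and solves the discrete algebraic Riccati equation for (A, B, Q, R) with Q, R positive definite, and K = −(BᵀPB + R)⁻¹BᵀPA, then every complex eigenvalue λ of A + BK satisfies |λ| < 1. -/

import Mathlib

open Matrix

/-- Spectral radius of a real matrix: max modulus of its complex eigenvalues. -/
noncomputable def specRad {d : ℕ} (M : Matrix (Fin d) (Fin d) ℝ) : ENNReal :=
  spectralRadius ℂ (M.map Complex.ofReal)

/-- Operator norm of a real matrix induced by Euclidean norms. -/
noncomputable def opNorm {d₁ d₂ : ℕ} (M : Matrix (Fin d₁) (Fin d₂) ℝ) : ℝ :=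
  ‖LinearMap.toContinuousLinearMap (Matrix.toEuclideanLin M)‖

/-- Euclidean norm of a real vector. -/
noncomputable def enorm {n : ℕ} (v : Fin n → ℝ) : ℝ := Real.sqrt (∑ i, (v i)^2)


open scoped ComplexOrder

lemma mapC_mul {l m n : Type*} [Fintype m] (M : Matrix l m ℝ) (N : Matrix m n ℝ) :
    (M * N).map Complex.ofReal = M.map Complex.ofReal * N.map Complex.ofReal :=
  Matrix.map_mul (f := Complex.ofRealHom)

lemma mapC_add {l m : Type*} (M N : Matrix l m ℝ) :
    (M + N).map Complex.ofReal = M.map Complex.ofReal + N.map Complex.ofReal := by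
  ext i j; simp

lemma mapC_sub {l m : Type*} (M N : Matrix l m ℝ) :
    (M - N).map Complex.ofReal = M.map Complex.ofReal - N.map Complex.ofReal := by
  ext i j; simp

lemma mapC_transpose {l m : Type*} (M : Matrix l m ℝ) :
    Mᵀ.map Complex.ofReal = (M.map Complex.ofReal)ᴴ := by
  ext i j; simp [Matrix.conjTranspose_apply, Complex.conj_ofReal]

lemma mapC_det {n : ℕ} (M : Matrix (Fin n) (Fin n) ℝ) :
    (M.map Complex.ofReal).det = Complex.ofReal M.det := by
  rw [show M.map Complex.ofReal = Complex.ofRealHom.mapMatrix M from rfl,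
    ← RingHom.map_det]
  rfl

lemma mapC_conjT {l m : Type*} (M : Matrix l m ℝ) :
    Mᴴ.map Complex.ofReal = (M.map Complex.ofReal)ᴴ := by
  ext i j; simp [Matrix.conjTranspose_apply, Complex.conj_ofReal]

lemma map_posSemidef {n : ℕ} {M : Matrix (Fin n) (Fin n) ℝ} (h : M.PosSemidef) :
    (M.map Complex.ofReal).PosSemidef := by
  have hC0 : ∃ C : Matrix (Fin n) (Fin n) ℝ, M = Cᴴ * C := by
    open scoped MatrixOrder in
    obtain ⟨C, hC⟩ := CStarAlgebra.nonneg_iff_eq_star_mul_self.mp (Matrix.nonneg_iff_posSemidef.mpr h)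
    exact ⟨C, hC⟩
  obtain ⟨C, hC⟩ := hC0
  have hmap : M.map Complex.ofReal
      = (C.map Complex.ofReal)ᴴ * (C.map Complex.ofReal) := by
    rw [hC, mapC_mul, mapC_conjT]
  rw [hmap]
  exact Matrix.posSemidef_conjTranspose_mul_self _

lemma map_posDef {n : ℕ} {M : Matrix (Fin n) (Fin n) ℝ} (h : M.PosDef) :
    (M.map Complex.ofReal).PosDef := by
  have hpsd := map_posSemidef h.posSemidef
  refine .of_dotProduct_mulVec_pos hpsd.isHermitian fun x hx => ?_
  refine lt_of_le_of_ne (hpsd.dotProduct_mulVec_nonneg x) (Ne.symm ?_)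
  intro h0
  have hker : (M.map Complex.ofReal) *ᵥ x = 0 :=
    (hpsd.dotProduct_mulVec_zero_iff x).mp h0
  have hdet : IsUnit (M.map Complex.ofReal).det := by
    rw [mapC_det]
    exact (isUnit_iff_ne_zero).mpr (by simpa using h.det_pos.ne')
  have hinj := Matrix.mulVec_injective_iff_isUnit.mpr ((Matrix.isUnit_iff_isUnit_det _).mpr hdet)
  exact hx (hinj (by simpa using hker))

/-- Stabilization via Riccati feedback: all eigenvalues of the closed loop lie inside the unit circle. -/
theorem riccati_feedback_stabilizes {d du : ℕ}
    (A P Q : Matrix (Fin d) (Fin d) ℝ) (B : Matrix (Fin d) (Fin du) ℝ)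
    (R : Matrix (Fin du) (Fin du) ℝ)
    (hQ : Q.PosDef) (hR : R.PosDef) (hP : P.PosSemidef)
    (hRic : P = Q + Aᵀ * P * A - Aᵀ * P * B * (Bᵀ * P * B + R)⁻¹ * (Bᵀ * P * A))
    (K : Matrix (Fin du) (Fin d) ℝ)
    (hK : K = -((Bᵀ * P * B + R)⁻¹ * (Bᵀ * P * A))) :
    ∀ lam ∈ spectrum ℂ ((A + B * K).map Complex.ofReal), ‖lam‖ < 1 := by
  classical
  intro lam hlam
  set S : Matrix (Fin du) (Fin du) ℝ := Bᵀ * P * B + R with hSdef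
  have hBtPB : (Bᵀ * P * B).PosSemidef := by
    have := hP.conjTranspose_mul_mul_same B
    simpa using this
  have hSpd : S.PosDef := Matrix.PosDef.posSemidef_add hBtPB hR
  have hSdet : IsUnit S.det := (Matrix.isUnit_iff_isUnit_det _).mp hSpd.isUnit
  have hSK : S * K = -(Bᵀ * P * A) := by
    rw [hK, Matrix.mul_neg, ← Matrix.mul_assoc, Matrix.mul_nonsing_inv _ hSdet, Matrix.one_mul]
  have hRic' : P = Q + Aᵀ * P * A + Aᵀ * P * B * K := by
    have h1 : Aᵀ * P * B * S⁻¹ * (Bᵀ * P * A) = -(Aᵀ * P * B * K) := by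
      rw [hK]
      simp [Matrix.mul_neg, Matrix.mul_assoc]
    conv_lhs => rw [hRic]
    rw [h1, sub_neg_eq_add]
  have hkey : P - (A + B * K)ᵀ * P * (A + B * K) = Q + Kᵀ * R * K := by
    simp only [Matrix.mul_assoc] at hSK hRic' ⊢
    have ha : Bᵀ * (P * A) = -(S * K) := by rw [hSK, neg_neg]
    have hb : Bᵀ * (P * (B * K)) = S * K - R * K := by
      have h5 : (Bᵀ * P * B) * K = (S - R) * K := by rw [hSdef, add_sub_cancel_right]
      simpa only [Matrix.mul_assoc, Matrix.sub_mul] using h5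
    simp only [Matrix.transpose_add, Matrix.transpose_mul, Matrix.add_mul, Matrix.mul_add,
      Matrix.mul_assoc, ha, hb, Matrix.mul_neg, Matrix.mul_sub]
    nth_rewrite 1 [hRic']
    abel
  -- complexify
  set L : Matrix (Fin d) (Fin d) ℝ := A + B * K with hLdef
  set Lc := L.map Complex.ofReal with hLcdef
  set Pc := P.map Complex.ofReal with hPcdef
  set Qc := Q.map Complex.ofReal with hQcdef
  set Rc := R.map Complex.ofReal with hRcdef
  set Kc := K.map Complex.ofReal with hKcdef
  have hPcpsd : Pc.PosSemidef := map_posSemidef hP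
  have hGpd : (Qc + Kcᴴ * Rc * Kc).PosDef :=
    (map_posDef hQ).add_posSemidef ((map_posDef hR).posSemidef.conjTranspose_mul_mul_same _)
  have hkeyC : Qc + Kcᴴ * Rc * Kc = Pc - Lcᴴ * Pc * Lc := by
    rw [hQcdef, hRcdef, hKcdef, hPcdef, hLcdef, ← mapC_transpose, ← mapC_mul, ← mapC_mul,
      ← mapC_transpose, ← mapC_mul, ← mapC_mul, ← mapC_add, ← mapC_sub, ← hkey]
  -- eigenvector
  have hEig : Module.End.HasEigenvalue (Matrix.toLin' Lc) lam := by
    rw [Module.End.hasEigenvalue_iff_mem_spectrum]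
    rw [show Matrix.toLin' Lc = Matrix.toLinAlgEquiv' Lc from rfl]
    rw [AlgEquiv.spectrum_eq Matrix.toLinAlgEquiv']
    exact hlam
  obtain ⟨v, hv⟩ := hEig.exists_hasEigenvector
  have hv0 : v ≠ 0 := hv.2
  have hvec : Lc *ᵥ v = lam • v := by
    have := hv.apply_eq_smul
    simpa [Matrix.toLin'_apply] using this
  -- quadratic form computation
  have hq : 0 ≤ star v ⬝ᵥ (Pc *ᵥ v) := hPcpsd.dotProduct_mulVec_nonneg v
  have hgt : 0 < star v ⬝ᵥ ((Qc + Kcᴴ * Rc * Kc) *ᵥ v) := hGpd.dotProduct_mulVec_pos hv0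
  have hcomp : star v ⬝ᵥ ((Pc - Lcᴴ * Pc * Lc) *ᵥ v)
      = (1 - (Complex.normSq lam : ℂ)) * (star v ⬝ᵥ (Pc *ᵥ v)) := by
    have h1 : (Lcᴴ * Pc * Lc) *ᵥ v = lam • (Lcᴴ *ᵥ (Pc *ᵥ v)) := by
      rw [← Matrix.mulVec_mulVec, hvec, Matrix.mulVec_smul, ← Matrix.mulVec_mulVec]
    have h2 : star v ⬝ᵥ (Lcᴴ *ᵥ (Pc *ᵥ v)) = (starRingEnd ℂ lam) * (star v ⬝ᵥ (Pc *ᵥ v)) := by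
      rw [Matrix.dotProduct_mulVec, ← Matrix.star_mulVec, hvec, star_smul, smul_dotProduct]
      simp
    rw [Matrix.sub_mulVec, dotProduct_sub, h1, dotProduct_smul, h2]
    have h3 : lam • ((starRingEnd ℂ) lam * (star v ⬝ᵥ Pc *ᵥ v))
        = (Complex.normSq lam : ℂ) * (star v ⬝ᵥ Pc *ᵥ v) := by
      rw [smul_eq_mul, ← mul_assoc, Complex.mul_conj]
    rw [h3]
    ring
  rw [hkeyC, hcomp] at hgt
  set q := star v ⬝ᵥ (Pc *ᵥ v) with hqdef
  have him : q.im = 0 := by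
    have := (Complex.le_def.mp hq).2
    simpa using this.symm
  have hre : 0 ≤ q.re := by
    have := (Complex.le_def.mp hq).1
    simpa using this
  have hgt' : 0 < ((1 - (Complex.normSq lam : ℂ)) * q).re := by
    have := (Complex.lt_def.mp hgt).1
    simpa using this
  have hre' : ((1 - (Complex.normSq lam : ℂ)) * q).re = (1 - Complex.normSq lam) * q.re := by
    simp [Complex.mul_re, him]
  rw [hre'] at hgt'
  have hn : Complex.normSq lam < 1 := by nlinarith
  have habs := Complex.sq_norm lam
  nlinarith [norm_nonneg lam]
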